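/- Let n ≥ 3 and let B_1,...,B_n be measurable subsets of [0,1]^n such that B_i depends only on coordinates i and i+1 (mod n), μ(B_i) = q for all i with q > 1/4, and μ(∪_i B_i) = 1. Then there exist distinct indices i, j with i ∈ {j−1, j, j+1} mod n (i.e., B_i and B_j are neighbors on the cycle) such that μ(B_i ∩ B_j) > 0. In other words, for q = 1/4 + ε with ε > 0 sufficiently small, no exclusive cylinder set conforming with the n-cycle bigraph achieves measure vector (q,...,q). -/

import Mathlib

open MeasureTheory
open scoped ENNReal

/-- The uniform probability measure on the unit cube `[0,1]^m`, viewed as a measure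
on `Fin m → ℝ`. -/
noncomputable def cubeMeasure (m : ℕ) : Measure (Fin m → ℝ) :=
  Measure.pi fun _ => volume.restrict (Set.Icc 0 1)

/-- `A` is a cylinder depending only on the coordinates in `S`. -/
def DependsOnlyOn {m : ℕ} (A : Set (Fin m → ℝ)) (S : Set (Fin m)) : Prop :=
  ∀ x y : Fin m → ℝ, (∀ j ∈ S, x j = y j) → (x ∈ A ↔ y ∈ A)

local notation "μ1" => MeasureTheory.volume.restrict (Set.Icc (0:ℝ) 1)

lemma mu1_prob : IsProbabilityMeasure (μ1) := ⟨by simp [Real.volume_Icc]⟩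

lemma cube_box {n : ℕ} [NeZero n] {a b c : Fin n} (hab : a ≠ b) (hac : a ≠ c) (hbc : b ≠ c)
    {s t u : Set ℝ} :
    cubeMeasure n {x | x a ∈ s ∧ x b ∈ t ∧ x c ∈ u} = μ1 s * (μ1 t * μ1 u) := by
  haveI := mu1_prob
  have hset : {x : Fin n → ℝ | x a ∈ s ∧ x b ∈ t ∧ x c ∈ u} =
      Set.pi Set.univ
        (fun j => if j = a then s else if j = b then t else if j = c then u else Set.univ) := by
    ext x
    simp only [Set.mem_pi, Set.mem_univ, forall_true_left, Set.mem_setOf_eq]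
    constructor
    · rintro ⟨h1, h2, h3⟩ j
      split_ifs with e1 e2 e3
      · exact e1 ▸ h1
      · exact e2 ▸ h2
      · exact e3 ▸ h3
      · trivial
    · intro h
      refine ⟨?_, ?_, ?_⟩
      · have := h a; rwa [if_pos rfl] at this
      · have := h b; rwa [if_neg (Ne.symm hab), if_pos rfl] at this
      · have := h c; rwa [if_neg (Ne.symm hac), if_neg (Ne.symm hbc), if_pos rfl] at this
  rw [hset, cubeMeasure, Measure.pi_pi]
  have habc : ({a, b, c} : Finset (Fin n)) = insert a (insert b {c}) := rfl
  rw [← Finset.prod_subset (Finset.subset_univ ({a, b, c} : Finset (Fin n))) (by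
    intro j _ hj
    simp only [Finset.mem_insert, Finset.mem_singleton, not_or] at hj
    rw [if_neg hj.1, if_neg hj.2.1, if_neg hj.2.2]
    exact measure_univ)]
  rw [habc, Finset.prod_insert (by simp [hab, hac]), Finset.prod_insert (by simp [hbc]),
    Finset.prod_singleton]
  rw [if_pos rfl, if_neg (Ne.symm hab), if_pos rfl, if_neg (Ne.symm hac),
    if_neg (Ne.symm hbc), if_pos rfl]

lemma cube_map_triple {n : ℕ} [NeZero n] {a b c : Fin n} (hab : a ≠ b) (hac : a ≠ c)
    (hbc : b ≠ c) :
    (cubeMeasure n).map (fun x => (x a, (x b, x c))) = (μ1).prod ((μ1).prod (μ1)) := by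
  haveI := mu1_prob
  have hg : Measurable fun x : Fin n → ℝ => (x b, x c) :=
    (measurable_pi_apply b).prodMk (measurable_pi_apply c)
  have hψ : Measurable fun x : Fin n → ℝ => (x a, (x b, x c)) :=
    (measurable_pi_apply a).prodMk hg
  refine (Measure.prod_eq fun s T hs hT => ?_).symm
  rw [Measure.map_apply hψ (hs.prod hT)]
  have hpre : (fun x : Fin n → ℝ => (x a, (x b, x c))) ⁻¹' (s ×ˢ T)
      = ((fun x => (x b, x c)) ⁻¹' T) ∩ ((fun x : Fin n → ℝ => x a) ⁻¹' s) := by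
    ext x
    simp only [Set.mem_preimage, Set.mem_prod, Set.mem_inter_iff]
    tauto
  rw [hpre, ← Measure.restrict_apply (hg hT),
    ← Measure.map_apply hg hT]
  haveI : IsFiniteMeasure ((μ1 s) • (μ1 : Measure ℝ)) := by
    constructor
    rw [Measure.smul_apply, smul_eq_mul]
    exact ENNReal.mul_lt_top (measure_lt_top _ _) (measure_lt_top _ _)
  have key : ((cubeMeasure n).restrict ((fun x : Fin n → ℝ => x a) ⁻¹' s)).map
      (fun x : Fin n → ℝ => (x b, x c)) = ((μ1 s) • (μ1 : Measure ℝ)).prod (μ1) := by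
    refine (Measure.prod_eq fun t u ht hu => ?_).symm
    rw [Measure.map_apply hg (ht.prod hu), Measure.restrict_apply (hg (ht.prod hu))]
    have he : (fun x : Fin n → ℝ => (x b, x c)) ⁻¹' (t ×ˢ u) ∩ ((fun x : Fin n → ℝ => x a) ⁻¹' s)
        = {x | x a ∈ s ∧ x b ∈ t ∧ x c ∈ u} := by
      ext x
      simp only [Set.mem_preimage, Set.mem_prod, Set.mem_inter_iff, Set.mem_setOf_eq]
      tauto
    rw [he, cube_box hab hac hbc, Measure.smul_apply, smul_eq_mul]
    ring
  rw [key, Measure.prod_apply hT, Measure.prod_apply hT, lintegral_smul_measure, smul_eq_mul]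
theorem stmt9 {n : ℕ} [NeZero n] (hn : 3 ≤ n) (q : ℝ) (hq : 1/4 < q)
    (B : Fin n → Set (Fin n → ℝ))
    (hmeas : ∀ i, MeasurableSet (B i))
    (hdep : ∀ i, DependsOnlyOn (B i) {i, i+1})
    (hB : ∀ i, cubeMeasure n (B i) = ENNReal.ofReal q)
    (hfull : cubeMeasure n (⋃ i, B i) = 1) :
    ∃ i j : Fin n, i ≠ j ∧ (j = i + 1 ∨ i = j + 1) ∧
      0 < cubeMeasure n (B i ∩ B j) := by
  by_contra hcon
  push_neg at hcon
  haveI := mu1_prob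
  haveI : IsProbabilityMeasure (cubeMeasure n) := by
    unfold cubeMeasure; infer_instance
  -- arithmetic facts in `Fin n`
  have hone : (1 : Fin n) ≠ 0 := by
    intro h
    have h1 : ((1 : Fin n) : ℕ) = 0 := by rw [h]; rfl
    rw [Fin.val_one'] at h1
    rw [Nat.mod_eq_of_lt (by omega)] at h1
    omega
  have htwo : (1 + 1 : Fin n) ≠ 0 := by
    intro h
    have h1 : ((1 + 1 : Fin n) : ℕ) = 0 := by rw [h]; rfl
    rw [Fin.val_add, Fin.val_one', Nat.mod_eq_of_lt (show 1 < n by omega)] at h1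
    rw [Nat.mod_eq_of_lt (by omega)] at h1
    omega
  have hsub : ∀ k : Fin n, k - 1 + 1 = k := fun k => sub_add_cancel k 1
  have hne : ∀ k : Fin n, k ≠ k + 1 := fun k h => hone (left_eq_add.mp h)
  have hne' : ∀ k : Fin n, k - 1 ≠ k := by
    intro k h
    exact hne k (by conv_lhs => rw [← hsub k, h])
  have hnec : ∀ k : Fin n, k - 1 ≠ k + 1 := by
    intro k h
    have h2 : k = k + (1 + 1) := by
      have h3 := congrArg (· + 1) h
      simp only [hsub k] at h3
      exact h3.trans (add_assoc k 1 1)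
    exact htwo (left_eq_add.mp h2)
  -- exclusivity hypothesis
  have hexcl : ∀ k : Fin n, cubeMeasure n (B (k - 1) ∩ B k) = 0 := by
    intro k
    have := hcon (k - 1) k (hne' k) (Or.inl (hsub k).symm)
    exact le_antisymm (by simpa using this) (zero_le)
  -- the two-variable sets underlying each `B i`
  set emb : Fin n → ℝ × ℝ → (Fin n → ℝ) :=
    fun i p j => if j = i then p.1 else if j = i + 1 then p.2 else 0 with hembdef
  have hembm : ∀ i, Measurable (emb i) := by
    intro i
    apply measurable_pi_lambda
    intro j
    by_cases h : j = i
    · simp only [hembdef, if_pos h]; exact measurable_fst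
    · by_cases h' : j = i + 1
      · simp only [hembdef, if_neg h, if_pos h']; exact measurable_snd
      · simp only [hembdef, if_neg h, if_neg h']; exact measurable_const
  set G : Fin n → Set (ℝ × ℝ) := fun i => emb i ⁻¹' B i with hGdef
  have hGm : ∀ i, MeasurableSet (G i) := fun i => (hembm i) (hmeas i)
  have hBmem : ∀ (i : Fin n) (x : Fin n → ℝ), x ∈ B i ↔ (x i, x (i + 1)) ∈ G i := by
    intro i x
    refine hdep i x (emb i (x i, x (i + 1))) ?_
    intro j hj
    rcases hj with rfl | hj
    · simp only [hembdef, if_pos rfl]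
    · rcases hj with rfl
      simp [hembdef, Ne.symm (hne i)]
  -- section functions
  set g : Fin n → ℝ → ℝ≥0∞ := fun i s => μ1 {t | (s, t) ∈ G i} with hgdef
  set f : Fin n → ℝ → ℝ≥0∞ := fun i s => μ1 {r | (r, s) ∈ G i} with hfdef
  have hgm : ∀ i, Measurable (g i) := fun i => measurable_measure_prodMk_left (hGm i)
  have hfm : ∀ i, Measurable (f i) := fun i => measurable_measure_prodMk_right (hGm i)
  -- the triple coordinate map at each shared coordinate k
  set ψ : Fin n → (Fin n → ℝ) → ℝ × ℝ × ℝ :=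
    fun k x => (x k, (x (k - 1), x (k + 1))) with hψdef
  have hψm : ∀ k, Measurable (ψ k) := fun k =>
    (measurable_pi_apply k).prodMk
      ((measurable_pi_apply (k - 1)).prodMk (measurable_pi_apply (k + 1)))
  have hmap : ∀ k, (cubeMeasure n).map (ψ k) = (μ1).prod ((μ1).prod (μ1)) := by
    intro k
    exact cube_map_triple (fun h => hne' k (h.symm)) (hne k) (hnec k)
  have hvia : ∀ (k : Fin n) (S : Set (ℝ × ℝ × ℝ)), MeasurableSet S →
      cubeMeasure n (ψ k ⁻¹' S) = ∫⁻ s, ((μ1).prod (μ1)) (Prod.mk s ⁻¹' S) ∂(μ1) := by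
    intro k S hS
    rw [← Measure.map_apply (hψm k) hS, hmap k, Measure.prod_apply hS]
  -- descriptions of B k and B (k-1) through ψ k
  set Sg : Fin n → Set (ℝ × ℝ × ℝ) := fun k => (fun p : ℝ × ℝ × ℝ => (p.1, p.2.2)) ⁻¹' G k
    with hSgdef
  set Sf : Fin n → Set (ℝ × ℝ × ℝ) := fun k => (fun p : ℝ × ℝ × ℝ => (p.2.1, p.1)) ⁻¹' G (k - 1)
    with hSfdef
  have hSgm : ∀ k, MeasurableSet (Sg k) :=
    fun k => (measurable_fst.prodMk measurable_snd.snd) (hGm k)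
  have hSfm : ∀ k, MeasurableSet (Sf k) :=
    fun k => (measurable_snd.fst.prodMk measurable_fst) (hGm (k - 1))
  have hBg : ∀ k, B k = ψ k ⁻¹' Sg k := by
    intro k; ext x
    simp only [hSgdef, hψdef, Set.mem_preimage]
    exact hBmem k x
  have hBf : ∀ k, B (k - 1) = ψ k ⁻¹' Sf k := by
    intro k; ext x
    simp only [hSfdef, hψdef, Set.mem_preimage]
    rw [hBmem (k - 1) x, hsub k]
  -- slice computations
  have hsliceg : ∀ (k : Fin n) (s : ℝ),
      Prod.mk s ⁻¹' Sg k = Set.univ ×ˢ {t | (s, t) ∈ G k} := by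
    intro k s; ext y
    simp only [hSgdef, Set.mem_preimage, Set.mem_prod, Set.mem_univ, true_and, Set.mem_setOf_eq]
  have hslicef : ∀ (k : Fin n) (s : ℝ),
      Prod.mk s ⁻¹' Sf k = {r | (r, s) ∈ G (k - 1)} ×ˢ Set.univ := by
    intro k s; ext y
    simp only [hSfdef, Set.mem_preimage, Set.mem_prod, Set.mem_univ, and_true, Set.mem_setOf_eq]
  -- integral facts
  have fact_g : ∀ k, ∫⁻ s, g k s ∂(μ1) = ENNReal.ofReal q := by
    intro k
    have := hB k
    rw [hBg k, hvia k _ (hSgm k)] at this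
    rw [← this]
    refine lintegral_congr fun s => ?_
    rw [hsliceg k s, Measure.prod_prod, measure_univ, one_mul]
  have fact_f : ∀ k, ∫⁻ s, f (k - 1) s ∂(μ1) = ENNReal.ofReal q := by
    intro k
    have := hB (k - 1)
    rw [hBf k, hvia k _ (hSfm k)] at this
    rw [← this]
    refine lintegral_congr fun s => ?_
    rw [hslicef k s, Measure.prod_prod, measure_univ, mul_one]
  have fact_e : ∀ k, ∫⁻ s, f (k - 1) s * g k s ∂(μ1) = 0 := by
    intro k
    have := hexcl k
    rw [hBf k, hBg k, ← Set.preimage_inter, hvia k _ ((hSfm k).inter (hSgm k))] at this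
    rw [← this]
    refine lintegral_congr fun s => ?_
    rw [Set.preimage_inter, hslicef k s, hsliceg k s]
    have : ({r | (r, s) ∈ G (k - 1)} ×ˢ (Set.univ : Set ℝ)) ∩
        ((Set.univ : Set ℝ) ×ˢ {t | (s, t) ∈ G k})
        = {r | (r, s) ∈ G (k - 1)} ×ˢ {t | (s, t) ∈ G k} := by
      ext y
      simp only [Set.mem_inter_iff, Set.mem_prod, Set.mem_univ, and_true, true_and,
        Set.mem_setOf_eq]
    rw [this, Measure.prod_prod]
  -- supports
  set Q : Fin n → Set ℝ := fun k => {s | g k s ≠ 0} with hQdef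
  set P : Fin n → Set ℝ := fun k => {s | f (k - 1) s ≠ 0} with hPdef
  have hQm : ∀ k, MeasurableSet (Q k) :=
    fun k => (hgm k) (measurableSet_singleton 0) |>.compl
  have hPm : ∀ k, MeasurableSet (P k) :=
    fun k => (hfm (k - 1)) (measurableSet_singleton 0) |>.compl
  have hPQ : ∀ k, μ1 (P k ∩ Q k) = 0 := by
    intro k
    have hae := (lintegral_eq_zero_iff ((hfm (k - 1)).mul (hgm k))).mp (fact_e k)
    rw [Filter.EventuallyEq, Filter.eventually_iff, mem_ae_iff] at hae
    refine measure_mono_null ?_ hae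
    intro s hs hs'
    simp only [Set.mem_compl_iff, Set.mem_setOf_eq] at hs'
    exact hs.1 (by simpa using mul_eq_zero.mp hs' |>.resolve_right hs.2)
  have hPq : ∀ k, ENNReal.ofReal q ≤ μ1 (P k) := by
    intro k
    calc ENNReal.ofReal q = ∫⁻ s, f (k - 1) s ∂(μ1) := (fact_f k).symm
    _ ≤ ∫⁻ s, (P k).indicator (fun _ => 1) s ∂(μ1) := by
        refine lintegral_mono fun s => ?_
        by_cases h : f (k - 1) s = 0
        · simp [h]
        · rw [Set.indicator_of_mem (show s ∈ P k from h)]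
          calc f (k - 1) s ≤ μ1 Set.univ := measure_mono (Set.subset_univ _)
          _ = 1 := measure_univ
    _ = μ1 (P k) := lintegral_indicator_one (hPm k)
  have hQc : ∀ k, ENNReal.ofReal q ≤ μ1 ((Q k)ᶜ) := by
    intro k
    calc ENNReal.ofReal q ≤ μ1 (P k) := hPq k
    _ = μ1 (P k \ (P k ∩ Q k)) := (measure_diff_null (hPQ k)).symm
    _ ≤ μ1 ((Q k)ᶜ) := measure_mono (by
        intro s hs
        simp only [Set.mem_diff, Set.mem_inter_iff, Set.mem_compl_iff] at hs ⊢
        tauto)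
  -- B k is a.e. contained in {x | x k ∈ Q k}
  have hnullB : ∀ k, cubeMeasure n (B k ∩ {x | x k ∈ (Q k)ᶜ}) = 0 := by
    intro k
    have hset : B k ∩ {x | x k ∈ (Q k)ᶜ} = ψ k ⁻¹' (Sg k ∩ {p | p.1 ∈ (Q k)ᶜ}) := by
      rw [Set.preimage_inter, ← hBg k]
      rfl
    rw [hset, hvia k (Sg k ∩ {p | p.1 ∈ (Q k)ᶜ}) ((hSgm k).inter (measurable_fst (hQm k).compl))]
    rw [← lintegral_zero (μ := (μ1 : Measure ℝ))]
    refine lintegral_congr fun s => ?_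
    by_cases hs : s ∈ Q k
    · have : Prod.mk s ⁻¹' (Sg k ∩ {p : ℝ × ℝ × ℝ | p.1 ∈ (Q k)ᶜ}) = ∅ := by
        ext y
        simp only [Set.preimage_inter, Set.mem_inter_iff, Set.mem_preimage, Set.mem_setOf_eq,
          Set.mem_compl_iff, Set.mem_empty_iff_false, iff_false]
        intro h
        exact h.2 hs
      rw [this, measure_empty]
    · refine measure_mono_null (by
        intro y hy
        rw [Set.preimage_inter] at hy
        exact (hsliceg k s ▸ hy.1)) ?_
      rw [Measure.prod_prod, measure_univ, one_mul]
      exact not_not.mp hs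
  -- the positive-measure uncovered set
  set D : Set (Fin n → ℝ) := Set.pi Set.univ (fun k => (Q k)ᶜ) with hDdef
  have hDval : cubeMeasure n D = ∏ k, μ1 ((Q k)ᶜ) := by
    rw [hDdef, cubeMeasure, Measure.pi_pi]
  have hDpos : 0 < cubeMeasure n D := by
    rw [hDval]
    have : (ENNReal.ofReal q) ^ n ≤ ∏ k : Fin n, μ1 ((Q k)ᶜ) := by
      calc (ENNReal.ofReal q) ^ n = ∏ _k : Fin n, ENNReal.ofReal q := by
            rw [Finset.prod_const, Finset.card_univ, Fintype.card_fin]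
      _ ≤ ∏ k : Fin n, μ1 ((Q k)ᶜ) := Finset.prod_le_prod' fun k _ => hQc k
    refine lt_of_lt_of_le ?_ this
    have hq0 : ENNReal.ofReal q ≠ 0 := by
      simp only [ne_eq, ENNReal.ofReal_eq_zero, not_le]
      linarith
    exact pos_iff_ne_zero.mpr (pow_ne_zero _ hq0)
  have hDnull : cubeMeasure n D = 0 := by
    refine le_antisymm ?_ (zero_le)
    have h1 : cubeMeasure n (D ∩ ⋃ k, B k) = 0 := by
      rw [Set.inter_iUnion]
      refine measure_iUnion_null fun k => ?_
      refine measure_mono_null ?_ (hnullB k)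
      intro x hx
      exact ⟨hx.2, hx.1 k (Set.mem_univ k)⟩
    have h2 : cubeMeasure n (D \ ⋃ k, B k) = 0 := by
      refine measure_mono_null (Set.diff_subset_compl _ _) ?_
      rw [measure_compl (MeasurableSet.iUnion fun k => hmeas k) (measure_ne_top _ _), hfull,
        measure_univ, tsub_self]
    calc cubeMeasure n D = cubeMeasure n ((D ∩ ⋃ k, B k) ∪ (D \ ⋃ k, B k)) := by
          rw [Set.inter_union_diff]
    _ ≤ cubeMeasure n (D ∩ ⋃ k, B k) + cubeMeasure n (D \ ⋃ k, B k) := measure_union_le _ _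
    _ = 0 := by rw [h1, h2, add_zero]
  exact hDpos.ne' hDnull
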